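/- For every positive integer k there are infinitely many pairs of positive integers (p, q) with gcd(p, q) = k and p, q ≥ 2 such that (p + q) does not divide (pq + k²); equivalently, such that (pq + k²)/(2(p + q)) is not half of an integer. -/

import Mathlib

/-- For every positive integer `k` there are infinitely many pairs of positive
integers `(p, q)` with `gcd(p, q) = k` and `p, q ≥ 2` such that `(p + q)` does not
divide `(pq + k²)`; equivalently (for such pairs the two conditions coincide),
such that `(pq + k²)/(2(p + q))` is not half of an integer. -/
theorem stmt_7 (k : ℕ) (hk : 0 < k) :
    {pq : ℕ × ℕ | 2 ≤ pq.1 ∧ 2 ≤ pq.2 ∧ Nat.gcd pq.1 pq.2 = k ∧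
      ¬ (pq.1 + pq.2) ∣ (pq.1 * pq.2 + k ^ 2)}.Infinite ∧
    ∀ p q : ℕ, 2 ≤ p → 2 ≤ q →
      (¬ (p + q) ∣ (p * q + k ^ 2) ↔
        ¬ ∃ n : ℤ, ((p : ℚ) * q + (k : ℚ) ^ 2) / (2 * ((p : ℚ) + q)) = (n : ℚ) / 2) := by
  constructor
  · apply Set.infinite_of_injective_forall_mem
      (f := fun n : ℕ => ((2 * k, (2 * n + 4 * k + 1) * k) : ℕ × ℕ))
    · intro a b hab
      simp only [Prod.mk.injEq] at hab
      have := hab.2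
      have hk' : k ≠ 0 := hk.ne'
      exact by
        have := Nat.eq_of_mul_eq_mul_right hk this
        omega
    · intro n
      refine ⟨by omega, by nlinarith, ?_, ?_⟩
      · show Nat.gcd (2 * k) ((2 * n + 4 * k + 1) * k) = k
        rw [mul_comm 2 k, mul_comm (2 * n + 4 * k + 1) k, Nat.gcd_mul_left]
        have : Nat.gcd 2 (2 * n + 4 * k + 1) = 1 := by
          have : Odd (2 * n + 4 * k + 1) := ⟨n + 2 * k, by ring⟩
          exact Nat.coprime_two_left.mpr this
        rw [this, mul_one]
      · show ¬ (2 * k + (2 * n + 4 * k + 1) * k) ∣ (2 * k * ((2 * n + 4 * k + 1) * k) + k ^ 2)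
        intro h
        have h1 : k * (2 * n + 4 * k + 3) ∣ k * (k * (4 * n + 8 * k + 3)) := by
          convert h using 1 <;> ring
        have h2 : (2 * n + 4 * k + 3) ∣ k * (4 * n + 8 * k + 3) :=
          (Nat.mul_dvd_mul_iff_left hk).mp h1
        have h3 : (2 * n + 4 * k + 3) ∣ 2 * k * (2 * n + 4 * k + 3) := ⟨2 * k, by ring⟩
        have h4 : (2 * n + 4 * k + 3) ∣ 3 * k := by
          have := Nat.dvd_sub h3 h2
          have heq : 2 * k * (2 * n + 4 * k + 3) - k * (4 * n + 8 * k + 3) = 3 * k := by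
            have : k * (4 * n + 8 * k + 3) ≤ 2 * k * (2 * n + 4 * k + 3) := by nlinarith
            nlinarith [Nat.sub_add_cancel this]
          rwa [heq] at this
        have := Nat.le_of_dvd (by omega) h4
        omega
  · intro p q hp hq
    apply not_congr
    have hpq : ((p : ℚ) + q) ≠ 0 := by positivity
    constructor
    · rintro ⟨c, hc⟩
      refine ⟨c, ?_⟩
      have : ((p : ℚ) * q + (k : ℚ) ^ 2) = ((p : ℚ) + q) * c := by
        exact_mod_cast congrArg (Nat.cast : ℕ → ℚ) hc
      rw [this]
      field_simp
      push_cast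
      ring
    · rintro ⟨n, hn⟩
      rw [div_eq_div_iff (by positivity) (by norm_num)] at hn
      have h2 : ((p * q + k ^ 2 : ℕ) : ℤ) = (n : ℤ) * ((p + q : ℕ) : ℤ) := by
        have : ((p : ℚ) * q + (k : ℚ) ^ 2) = (n : ℚ) * ((p : ℚ) + q) := by linarith
        push_cast
        exact_mod_cast this
      have hd : ((p + q : ℕ) : ℤ) ∣ ((p * q + k ^ 2 : ℕ) : ℤ) := ⟨n, by linarith [h2]⟩
      exact_mod_cast hd
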